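/- arXiv:2104.12394 — 4 statements merged into one kernel-verified Lean document; each statement's English description precedes it below -/
import Mathlib

section
/- Under the band hypotheses, the matrix T_N is invertible for all sufficiently large N. -/
open Finset Filter Matrix
open scoped ComplexConjugate

/-- The (N+1)×(N+1) band Toeplitz matrix with entries `a (l−k)` for `|k−l| ≤ n₀`,
and `0` otherwise. -/
def bandToeplitz (a : ℤ → ℂ) (n₀ N : ℕ) : Matrix (Fin (N + 1)) (Fin (N + 1)) ℂ :=
  fun k l => if |(l : ℤ) - (k : ℤ)| ≤ (n₀ : ℤ) then a ((l : ℤ) - (k : ℤ)) else 0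

/-- `K(z) = Σ_{n=−n₀}^{n₀} a_n z^{n+n₀}`. -/
noncomputable def bandK (a : ℤ → ℂ) (n₀ : ℕ) (z : ℂ) : ℂ :=
  ∑ n ∈ Finset.Icc (-(n₀ : ℤ)) (n₀ : ℤ), a n * z ^ (n + n₀).toNat

/-- Orthogonality of exponentials on `[0, 2π]`. -/
lemma band_orth (m : ℤ) :
    (∫ θ in (0:ℝ)..(2*Real.pi), Complex.exp ((m : ℂ) * θ * Complex.I)) =
      if m = 0 then ((2*Real.pi : ℝ) : ℂ) else 0 := by
  rcases eq_or_ne m 0 with h | h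
  · simp [h]
  · rw [if_neg h]
    have hc : (m : ℂ) * Complex.I ≠ 0 :=
      mul_ne_zero (by exact_mod_cast h) Complex.I_ne_zero
    have := integral_exp_mul_complex (a := 0) (b := 2*Real.pi) hc
    have heq : ∀ θ : ℝ, (m : ℂ) * θ * Complex.I = ((m : ℂ) * Complex.I) * θ := by
      intro θ; ring
    simp only [heq]
    rw [this]
    have h1 : Complex.exp ((m : ℂ) * Complex.I * ((2*Real.pi : ℝ) : ℂ)) = 1 := by
      rw [show (m : ℂ) * Complex.I * ((2*Real.pi : ℝ) : ℂ) = (m : ℂ) * (2*Real.pi*Complex.I) by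
        push_cast; ring]
      exact Complex.exp_int_mul_two_pi_mul_I m
    rw [h1]
    simp

-- The key expansion: integrating the symbol against trigonometric polynomials
-- produces the Toeplitz quadratic form.
set_option maxHeartbeats 1000000 in
lemma band_expand (b : ℤ → ℂ) (m₀ N : ℕ) (x : Fin (N+1) → ℂ) :
    (∫ θ in (0:ℝ)..(2*Real.pi),
      (∑ n ∈ Finset.Icc (-(m₀:ℤ)) (m₀:ℤ), b n * Complex.exp ((n:ℂ) * θ * Complex.I)) *
      ((∑ k : Fin (N+1), conj (x k) * Complex.exp (((k:ℕ):ℂ) * θ * Complex.I)) *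
       (∑ l : Fin (N+1), x l * Complex.exp (-(((l:ℕ):ℂ)) * θ * Complex.I))))
    = (2*Real.pi : ℝ) * ∑ k : Fin (N+1), ∑ l : Fin (N+1),
        conj (x k) * bandToeplitz b m₀ N k l * x l := by
  have hpt : ∀ θ : ℝ,
      (∑ n ∈ Finset.Icc (-(m₀:ℤ)) (m₀:ℤ), b n * Complex.exp ((n:ℂ) * θ * Complex.I)) *
      ((∑ k : Fin (N+1), conj (x k) * Complex.exp (((k:ℕ):ℂ) * θ * Complex.I)) *
       (∑ l : Fin (N+1), x l * Complex.exp (-(((l:ℕ):ℂ)) * θ * Complex.I)))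
      = ∑ n ∈ Finset.Icc (-(m₀:ℤ)) (m₀:ℤ), ∑ k : Fin (N+1), ∑ l : Fin (N+1),
          (b n * conj (x k) * x l) *
            Complex.exp (((n + (k:ℤ) - (l:ℤ) : ℤ) : ℂ) * θ * Complex.I) := by
    intro θ
    rw [Finset.sum_mul_sum, Finset.sum_mul_sum]
    simp only [Finset.mul_sum]
    refine Finset.sum_congr rfl fun n _ => Finset.sum_congr rfl fun k _ =>
      Finset.sum_congr rfl fun l _ => ?_
    have hE : Complex.exp ((n:ℂ) * θ * Complex.I) *
        (Complex.exp (((k:ℕ):ℂ) * θ * Complex.I) *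
          Complex.exp (-(((l:ℕ):ℂ)) * θ * Complex.I)) =
        Complex.exp (((n + (k:ℤ) - (l:ℤ) : ℤ) : ℂ) * θ * Complex.I) := by
      rw [← Complex.exp_add, ← Complex.exp_add]
      congr 1
      push_cast
      ring
    linear_combination (b n * conj (x k) * x l) * hE
  rw [intervalIntegral.integral_congr (fun θ _ => hpt θ)]
  have C3 : ∀ (n : ℤ) (k l : Fin (N+1)), Continuous
      (fun θ : ℝ => (b n * conj (x k) * x l) *
        Complex.exp (((n + (k:ℤ) - (l:ℤ) : ℤ) : ℂ) * θ * Complex.I)) := by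
    intro n k l; fun_prop
  have C2 : ∀ (n : ℤ) (k : Fin (N+1)), Continuous
      (fun θ : ℝ => ∑ l : Fin (N+1), (b n * conj (x k) * x l) *
        Complex.exp (((n + (k:ℤ) - (l:ℤ) : ℤ) : ℂ) * θ * Complex.I)) := fun n k =>
    continuous_finset_sum _ (fun l _ => C3 n k l)
  have C1 : ∀ (n : ℤ), Continuous
      (fun θ : ℝ => ∑ k : Fin (N+1), ∑ l : Fin (N+1), (b n * conj (x k) * x l) *
        Complex.exp (((n + (k:ℤ) - (l:ℤ) : ℤ) : ℂ) * θ * Complex.I)) := fun n =>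
    continuous_finset_sum _ (fun k _ => C2 n k)
  have hint : (∫ θ in (0:ℝ)..(2*Real.pi),
      ∑ n ∈ Finset.Icc (-(m₀:ℤ)) (m₀:ℤ), ∑ k : Fin (N+1), ∑ l : Fin (N+1),
        (b n * conj (x k) * x l) *
          Complex.exp (((n + (k:ℤ) - (l:ℤ) : ℤ) : ℂ) * θ * Complex.I))
      = ∑ n ∈ Finset.Icc (-(m₀:ℤ)) (m₀:ℤ), ∑ k : Fin (N+1), ∑ l : Fin (N+1),
          (b n * conj (x k) * x l) *
            (if (n + (k:ℤ) - (l:ℤ) : ℤ) = 0 then ((2*Real.pi : ℝ) : ℂ) else 0) := by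
    rw [intervalIntegral.integral_finset_sum
      (f := fun (n : ℤ) (θ : ℝ) => ∑ k : Fin (N+1), ∑ l : Fin (N+1),
        (b n * conj (x k) * x l) *
          Complex.exp (((n + (k:ℤ) - (l:ℤ) : ℤ) : ℂ) * θ * Complex.I))
      (fun n _ => (C1 n).intervalIntegrable _ _)]
    refine Finset.sum_congr rfl fun n _ => ?_
    rw [intervalIntegral.integral_finset_sum
      (f := fun (k : Fin (N+1)) (θ : ℝ) => ∑ l : Fin (N+1),
        (b n * conj (x k) * x l) *
          Complex.exp (((n + (k:ℤ) - (l:ℤ) : ℤ) : ℂ) * θ * Complex.I))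
      (fun k _ => (C2 n k).intervalIntegrable _ _)]
    refine Finset.sum_congr rfl fun k _ => ?_
    rw [intervalIntegral.integral_finset_sum
      (f := fun (l : Fin (N+1)) (θ : ℝ) =>
        (b n * conj (x k) * x l) *
          Complex.exp (((n + (k:ℤ) - (l:ℤ) : ℤ) : ℂ) * θ * Complex.I))
      (fun l _ => (C3 n k l).intervalIntegrable _ _)]
    refine Finset.sum_congr rfl fun l _ => ?_
    rw [intervalIntegral.integral_const_mul, band_orth]
  rw [hint, Finset.sum_comm]
  rw [Finset.mul_sum]
  refine Finset.sum_congr rfl fun k _ => ?_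
  rw [Finset.sum_comm, Finset.mul_sum]
  refine Finset.sum_congr rfl fun l _ => ?_
  have hstep : ∀ n ∈ Finset.Icc (-(m₀:ℤ)) (m₀:ℤ),
      (b n * conj (x k) * x l) *
        (if (n + (k:ℤ) - (l:ℤ) : ℤ) = 0 then ((2*Real.pi : ℝ) : ℂ) else 0)
      = if n = (l:ℤ) - (k:ℤ) then
          (b n * conj (x k) * x l) * ((2*Real.pi : ℝ) : ℂ) else 0 := by
    intro n _
    by_cases h : n = (l:ℤ) - (k:ℤ)
    · rw [if_pos h, if_pos (by omega)]
    · rw [if_neg h, if_neg (by omega), mul_zero]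
  rw [Finset.sum_congr rfl hstep, Finset.sum_ite_eq']
  simp only [bandToeplitz, Finset.mem_Icc]
  by_cases h : |(l:ℤ) - (k:ℤ)| ≤ (m₀:ℤ)
  · rw [if_pos (abs_le.mp h), if_pos h]; ring
  · rw [if_neg (fun hc => h (abs_le.mpr hc)), if_neg h]; ring

lemma band_key_pos (c h : ℝ → ℝ) (hc : Continuous c) (hh : Continuous h)
    (hcpos : ∀ θ, 0 < c θ) (hhnn : ∀ θ, 0 ≤ h θ)
    (hint : (∫ θ in (0:ℝ)..(2*Real.pi), c θ * h θ) = 0) :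
    (∫ θ in (0:ℝ)..(2*Real.pi), h θ) ≤ 0 := by
  have hπ : (0:ℝ) ≤ 2*Real.pi := by positivity
  obtain ⟨θ₀, hθ₀, hmin⟩ := (isCompact_Icc (a := (0:ℝ)) (b := 2*Real.pi)).exists_isMinOn
    (Set.nonempty_Icc.mpr hπ) hc.continuousOn
  have hε : 0 < c θ₀ := hcpos θ₀
  have h1 : (∫ θ in (0:ℝ)..(2*Real.pi), c θ₀ * h θ) ≤
      ∫ θ in (0:ℝ)..(2*Real.pi), c θ * h θ := by
    apply intervalIntegral.integral_mono_on hπ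
      ((continuous_const.mul hh).intervalIntegrable _ _)
      ((hc.mul hh).intervalIntegrable _ _)
    intro θ hθ
    exact mul_le_mul_of_nonneg_right (hmin hθ) (hhnn θ)
  rw [intervalIntegral.integral_const_mul, hint] at h1
  nlinarith [h1]

/-- Under the band hypotheses (the symbol polynomial `K` has no root of modulus one,
and has exactly `n₀` roots, with multiplicity, of modulus strictly less than one and
`n₀` roots of modulus strictly greater than one), the band Toeplitz matrix `T_N` is
invertible for all sufficiently large `N`. -/
theorem stmt5 (n₀ : ℕ) (hn₀ : 1 ≤ n₀) (a : ℤ → ℂ)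
    (ha : ∀ j : ℤ, a (-j) = conj (a j))
    (hK1 : ∀ z : ℂ, ‖z‖ = 1 → bandK a n₀ z ≠ 0)
    (σ τ : ℕ) (α : Fin σ → ℂ) (s : Fin σ → ℕ) (β : Fin τ → ℂ) (t : Fin τ → ℕ) (C : ℂ)
    (hC : C ≠ 0)
    (hα : ∀ i, ‖α i‖ < 1) (hαinj : Function.Injective α)
    (hs : ∀ i, 0 < s i) (hssum : ∑ i, s i = n₀)
    (hβ : ∀ j, 1 < ‖β j‖) (hβinj : Function.Injective β)
    (ht : ∀ j, 0 < t j) (htsum : ∑ j, t j = n₀)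
    (hfact : ∀ z : ℂ,
      bandK a n₀ z = C * (∏ i, (z - α i) ^ s i) * ∏ j, (z - β j) ^ t j) :
    ∀ᶠ N in atTop, IsUnit (bandToeplitz a n₀ N) := by
  -- the symbol as a function on ℝ
  set F : ℝ → ℂ := fun θ =>
    ∑ n ∈ Finset.Icc (-(n₀:ℤ)) (n₀:ℤ), a n * Complex.exp ((n:ℂ) * θ * Complex.I) with hF
  have hFcont : Continuous F := by
    apply continuous_finset_sum
    intro n _
    fun_prop
  -- F is real-valued
  have hconj : ∀ θ : ℝ, conj (F θ) = F θ := by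
    intro θ
    rw [hF]
    simp only [map_sum, _root_.map_mul]
    refine Finset.sum_nbij' (fun n => -n) (fun n => -n) ?_ ?_ ?_ ?_ ?_
    · intro n hn; simp only [Finset.mem_Icc] at *; omega
    · intro n hn; simp only [Finset.mem_Icc] at *; omega
    · intro n _; ring
    · intro n _; ring
    · intro n _
      rw [← ha n]
      congr 1
      rw [← Complex.exp_conj]
      congr 1
      simp [Complex.ext_iff]
  set g : ℝ → ℝ := fun θ => (F θ).re with hg
  have hgcont : Continuous g := Complex.continuous_re.comp hFcont
  have hFre : ∀ θ : ℝ, F θ = ((g θ : ℝ) : ℂ) := by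
    intro θ
    exact (Complex.conj_eq_iff_re.mp (hconj θ)).symm
  -- F never vanishes
  have hFne : ∀ θ : ℝ, F θ ≠ 0 := by
    intro θ hF0
    apply hK1 (Complex.exp ((θ:ℂ) * Complex.I)) (Complex.norm_exp_ofReal_mul_I θ)
    have hBK : bandK a n₀ (Complex.exp ((θ:ℂ) * Complex.I)) =
        F θ * Complex.exp ((n₀:ℂ) * θ * Complex.I) := by
      rw [bandK, hF, Finset.sum_mul]
      refine Finset.sum_congr rfl fun n hn => ?_
      have hn' := Finset.mem_Icc.mp hn
      rw [← Complex.exp_nat_mul, mul_assoc]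
      congr 1
      rw [← Complex.exp_add]
      congr 1
      have hcast : (((n + (n₀:ℤ)).toNat : ℤ) : ℂ) = (n:ℂ) + (n₀:ℂ) := by
        rw [Int.toNat_of_nonneg (by omega)]
        push_cast; ring
      push_cast at hcast ⊢
      rw [hcast]
      ring
    rw [hBK, hF0, zero_mul]
  have hgne : ∀ θ : ℝ, g θ ≠ 0 := by
    intro θ h0
    exact hFne θ (by rw [hFre θ, h0, Complex.ofReal_zero])
  -- sign dichotomy
  have hsign : (∀ θ : ℝ, 0 < g θ) ∨ (∀ θ : ℝ, g θ < 0) := by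
    rcases lt_or_gt_of_ne (hgne 0) with h0 | h0
    · right
      intro θ
      rcases lt_or_gt_of_ne (hgne θ) with h | h
      · exact h
      · exfalso
        obtain ⟨t', ht'⟩ := intermediate_value_univ 0 θ hgcont
          (Set.mem_Icc.mpr ⟨le_of_lt h0, le_of_lt h⟩)
        exact hgne t' ht'
    · left
      intro θ
      rcases lt_or_gt_of_ne (hgne θ) with h | h
      · exfalso
        obtain ⟨t', ht'⟩ := intermediate_value_univ θ 0 hgcont
          (Set.mem_Icc.mpr ⟨le_of_lt h, le_of_lt h0⟩)
        exact hgne t' ht'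
      · exact h
  -- main step: every bandToeplitz is invertible
  refine Filter.Eventually.of_forall (fun N => ?_)
  rw [Matrix.isUnit_iff_isUnit_det, isUnit_iff_ne_zero]
  intro hdet
  obtain ⟨x, hx0, hxv⟩ := (Matrix.exists_mulVec_eq_zero_iff).mpr hdet
  -- the trigonometric polynomial built from x
  set cL : ℝ → ℂ := fun θ => ∑ l : Fin (N+1), x l * Complex.exp (-(((l:ℕ):ℂ)) * θ * Complex.I)
    with hcL
  have hcLcont : Continuous cL := by
    apply continuous_finset_sum; intro l _; fun_prop
  have hconjL : ∀ θ : ℝ, conj (cL θ) =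
      ∑ k : Fin (N+1), conj (x k) * Complex.exp (((k:ℕ):ℂ) * θ * Complex.I) := by
    intro θ
    rw [hcL]
    simp only [map_sum, _root_.map_mul]
    refine Finset.sum_congr rfl fun k _ => ?_
    congr 1
    rw [← Complex.exp_conj]
    congr 1
    simp [Complex.ext_iff]
  set h : ℝ → ℝ := fun θ => Complex.normSq (cL θ) with hh
  have hhcont : Continuous h := Complex.continuous_normSq.comp hcLcont
  have hhnn : ∀ θ, 0 ≤ h θ := fun θ => Complex.normSq_nonneg _
  -- first integral identity: ∫ g h = 0
  have hI1 : (∫ θ in (0:ℝ)..(2*Real.pi), g θ * h θ) = 0 := by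
    have hq : ∑ k : Fin (N+1), ∑ l : Fin (N+1),
        conj (x k) * bandToeplitz a n₀ N k l * x l = 0 := by
      have : ∀ k : Fin (N+1), ∑ l, conj (x k) * bandToeplitz a n₀ N k l * x l
          = conj (x k) * ((bandToeplitz a n₀ N).mulVec x k) := by
        intro k
        rw [Matrix.mulVec, dotProduct, Finset.mul_sum]
        exact Finset.sum_congr rfl fun l _ => by ring
      rw [Finset.sum_congr rfl fun k _ => this k]
      simp [hxv]
    have hexp := band_expand a n₀ N x
    rw [hq, mul_zero] at hexp
    have hpt : ∀ θ : ℝ,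
        (∑ n ∈ Finset.Icc (-(n₀:ℤ)) (n₀:ℤ), a n * Complex.exp ((n:ℂ) * θ * Complex.I)) *
        ((∑ k : Fin (N+1), conj (x k) * Complex.exp (((k:ℕ):ℂ) * θ * Complex.I)) *
         (∑ l : Fin (N+1), x l * Complex.exp (-(((l:ℕ):ℂ)) * θ * Complex.I)))
        = ((g θ * h θ : ℝ) : ℂ) := by
      intro θ
      have hFθ : (∑ n ∈ Finset.Icc (-(n₀:ℤ)) (n₀:ℤ),
          a n * Complex.exp ((n:ℂ) * θ * Complex.I)) = F θ := rfl
      have hcLθ : (∑ l : Fin (N+1),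
          x l * Complex.exp (-(((l:ℕ):ℂ)) * θ * Complex.I)) = cL θ := rfl
      have hns : conj (cL θ) * cL θ = ((h θ : ℝ) : ℂ) := by
        rw [hh]; exact (Complex.normSq_eq_conj_mul_self).symm
      rw [hcLθ, ← hconjL θ, hFθ, hns, hFre θ]
      push_cast
      ring
    rw [intervalIntegral.integral_congr (fun θ _ => hpt θ)] at hexp
    rw [intervalIntegral.integral_ofReal] at hexp
    exact_mod_cast hexp
  -- second integral identity : ∫ h = 2π Σ normSq x
  have hI2 : (∫ θ in (0:ℝ)..(2*Real.pi), h θ)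
      = 2*Real.pi * ∑ k : Fin (N+1), Complex.normSq (x k) := by
    set b' : ℤ → ℂ := fun n => if n = 0 then 1 else 0 with hb'
    have hexp := band_expand b' 0 N x
    have hT' : ∀ k l : Fin (N+1), bandToeplitz b' 0 N k l = if l = k then 1 else 0 := by
      intro k l
      by_cases hkl : l = k
      · subst hkl; simp [bandToeplitz, hb']
      · have hne : ((l:ℤ) - (k:ℤ)) ≠ 0 := by
          intro hc
          exact hkl (Fin.ext (by omega))
        rw [if_neg hkl, bandToeplitz]
        rw [if_neg (by simp only [Nat.cast_zero]; rw [abs_nonpos_iff]; exact hne)]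
    have hRHS : ∑ k : Fin (N+1), ∑ l : Fin (N+1),
        conj (x k) * bandToeplitz b' 0 N k l * x l
        = ((∑ k : Fin (N+1), Complex.normSq (x k) : ℝ) : ℂ) := by
      push_cast
      refine Finset.sum_congr rfl fun k _ => ?_
      simp only [hT', mul_ite, ite_mul, mul_one, mul_zero, zero_mul]
      rw [Finset.sum_ite_eq' Finset.univ k (fun l => conj (x k) * x l)]
      rw [if_pos (Finset.mem_univ k)]
      rw [mul_comm]
      exact Complex.mul_conj (x k)
    rw [hRHS] at hexp
    have hpt : ∀ θ : ℝ,
        (∑ n ∈ Finset.Icc (-((0:ℕ):ℤ)) ((0:ℕ):ℤ), b' n * Complex.exp ((n:ℂ) * θ * Complex.I)) *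
        ((∑ k : Fin (N+1), conj (x k) * Complex.exp (((k:ℕ):ℂ) * θ * Complex.I)) *
         (∑ l : Fin (N+1), x l * Complex.exp (-(((l:ℕ):ℂ)) * θ * Complex.I)))
        = ((h θ : ℝ) : ℂ) := by
      intro θ
      have h1 : (∑ n ∈ Finset.Icc (-((0:ℕ):ℤ)) ((0:ℕ):ℤ),
          b' n * Complex.exp ((n:ℂ) * θ * Complex.I)) = 1 := by
        simp [hb']
      rw [h1, one_mul, ← hconjL θ, hh]
      exact (Complex.normSq_eq_conj_mul_self).symm
    rw [intervalIntegral.integral_congr (fun θ _ => hpt θ)] at hexp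
    rw [intervalIntegral.integral_ofReal] at hexp
    exact_mod_cast hexp
  -- positivity of Σ normSq x
  have hS : 0 < ∑ k : Fin (N+1), Complex.normSq (x k) := by
    obtain ⟨k₀, hk₀⟩ := Function.ne_iff.mp hx0
    exact Finset.sum_pos' (fun k _ => Complex.normSq_nonneg _)
      ⟨k₀, Finset.mem_univ _, Complex.normSq_pos.mpr hk₀⟩
  have hπ : 0 < 2*Real.pi := by positivity
  rcases hsign with hpos | hneg
  · have := band_key_pos g h hgcont hhcont hpos hhnn hI1
    rw [hI2] at this
    nlinarith
  · have hI1' : (∫ θ in (0:ℝ)..(2*Real.pi), (-g θ) * h θ) = 0 := by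
      have : (fun θ => (-g θ) * h θ) = fun θ => -(g θ * h θ) := by funext θ; ring
      rw [this, intervalIntegral.integral_neg, hI1, neg_zero]
    have := band_key_pos (fun θ => -g θ) h hgcont.neg hhcont
      (fun θ => neg_pos.mpr (hneg θ)) hhnn hI1'
    rw [hI2] at this
    nlinarith
end

section
/- For every integer m ≥ 1 there exist polynomials ψ_{1,m},…,ψ_{m,m} with deg ψ_{k,m} ≤ m−k, independent of α and r, such that for every complex α with 0 < |α| < 1 and every integer r ≥ 0, the following identity holds in L²(𝕋): π₋( χ^r (1 − α·conj(χ))^{−m} ) = α^{r+1} · conj(χ) · Σ_{k=1}^{m} ψ_{k,m}(r) · (1 − α·conj(χ))^{−k}. -/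
open MeasureTheory Real Complex Filter Finset Matrix
open scoped ENNReal Topology ComplexConjugate

noncomputable section

instance : Fact (0 < 2 * π) := ⟨by positivity⟩

/-- The Hilbert space L²(𝕋) for 𝕋 = ℝ/2πℤ with normalized Haar measure. -/
abbrev Ltwo := Lp ℂ 2 (AddCircle.haarAddCircle : Measure (AddCircle (2 * π)))

/-- The orthogonal projection `π₊` of L²(𝕋) onto the Hardy space
`H⁺(𝕋) = {ψ : ψ̂(u) = 0 for u < 0}`, expressed through the Fourier basis. -/
def piPlus (ψ : Ltwo) : Ltwo :=
  ∑' u : ℤ, if 0 ≤ u then fourierBasis.repr ψ u • (fourierBasis u : Ltwo) else 0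

/-- The orthogonal projection `π₋` of L²(𝕋) onto
`(H⁺(𝕋))^⊥ = {ψ : ψ̂(u) = 0 for u ≥ 0}`, expressed through the Fourier basis. -/
def piMinus (ψ : Ltwo) : Ltwo :=
  ∑' u : ℤ, if u < 0 then fourierBasis.repr ψ u • (fourierBasis u : Ltwo) else 0

/-- Pointwise multiplication of `ψ ∈ L²(𝕋)` by a function `Φ` (defined to be `0` in the
degenerate case where the product is not square integrable). -/
def mulLp (Φ : AddCircle (2 * π) → ℂ) (ψ : Ltwo) : Ltwo := by
  classical exact
    if h : MemLp (fun θ => Φ θ * (ψ : AddCircle (2 * π) → ℂ) θ) 2 AddCircle.haarAddCircle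
    then h.toLp _ else 0

/-- The element of L²(𝕋) represented by a square-integrable function `f` (defined to be
`0` in the degenerate case where `f` is not square integrable). -/
def toLp2 (f : AddCircle (2 * π) → ℂ) : Ltwo := by
  classical exact if h : MemLp f 2 AddCircle.haarAddCircle then h.toLp f else 0

/-- The Hardy space `H⁺(𝕋)` as a subset of L²(𝕋). -/
def Hplus : Set Ltwo :=
  {ψ | ∀ u : ℤ, u < 0 → fourierCoeff (ψ : AddCircle (2 * π) → ℂ) u = 0}

/-- The Hankel operator `H_Φ : ψ ↦ π₋(Φψ)`. -/
def hankel (Φ : AddCircle (2 * π) → ℂ) (ψ : Ltwo) : Ltwo := piMinus (mulLp Φ ψ)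

/-- The Hankel operator `H_Φ̃ : ψ ↦ π₊(Φ̃ψ)`. -/
def hankelTilde (Φ : AddCircle (2 * π) → ℂ) (ψ : Ltwo) : Ltwo := piPlus (mulLp Φ ψ)

open Polynomial in
lemma vand (j : ℕ) : ∀ n r : ℕ,
    ∑ p ∈ Finset.HasAntidiagonal.antidiagonal n, (r + p.1).choose p.1 * (j + p.2).choose p.2
      = (r + j + n + 1).choose n := by
  intro n
  induction n with
  | zero => simp
  | succ n ih =>
    intro r
    induction r with
    | zero =>
      rw [Finset.Nat.sum_antidiagonal_succ]
      dsimp only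
      have h1 : ∑ p ∈ Finset.HasAntidiagonal.antidiagonal n, (0 + (p.1 + 1)).choose (p.1 + 1)
          * (j + p.2).choose p.2 = ∑ p ∈ Finset.HasAntidiagonal.antidiagonal n, (0 + p.1).choose p.1
          * (j + p.2).choose p.2 := by
        apply Finset.sum_congr rfl
        intro p _
        simp [Nat.choose_self, Nat.choose_zero_right]
      rw [h1, ih 0]
      simp only [Nat.zero_add, Nat.choose_zero_right, one_mul]
      rw [show j + (n + 1) = j + n + 1 from by omega]
      rw [Nat.choose_succ_succ (j + n + 1) n]
      simp only [Nat.succ_eq_add_one]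
      omega
    | succ r ihr =>
      rw [Finset.Nat.sum_antidiagonal_succ]
      rw [Finset.Nat.sum_antidiagonal_succ] at ihr
      dsimp only at ihr ⊢
      simp only [Nat.choose_zero_right, one_mul] at ihr ⊢
      have split : ∀ p ∈ Finset.HasAntidiagonal.antidiagonal n,
          (r + 1 + (p.1 + 1)).choose (p.1 + 1) * (j + p.2).choose p.2
          = (r + 1 + p.1).choose p.1 * (j + p.2).choose p.2
            + (r + (p.1 + 1)).choose (p.1 + 1) * (j + p.2).choose p.2 := by
        intro p _
        have h := Nat.choose_succ_succ (r + 1 + p.1) p.1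
        have e1 : r + 1 + (p.1 + 1) = (r + 1 + p.1) + 1 := by omega
        have e2 : r + (p.1 + 1) = r + 1 + p.1 := by omega
        rw [e1, h, ← e2, Nat.add_mul]
      rw [Finset.sum_congr rfl split, Finset.sum_add_distrib, ih (r + 1)]
      rw [show r + 1 + j + (n + 1) + 1 = r + j + n + 2 + 1 from by omega]
      rw [show r + 1 + j + n + 1 = r + j + n + 2 from by omega]
      rw [show r + j + (n + 1) + 1 = r + j + n + 2 from by omega] at ihr
      rw [Nat.choose_succ_succ (r + j + n + 2) n]
      simp only [Nat.succ_eq_add_one]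
      omega

lemma icc_sum (m : ℕ) (hm : 1 ≤ m) (r j : ℕ) :
    ∑ k ∈ Finset.Icc 1 m, (r + (m - k)).choose (m - k) * (j + (k - 1)).choose (k - 1)
      = (r + j + m).choose (m - 1) := by
  have h := vand j (m - 1) r
  have e : r + j + (m - 1) + 1 = r + j + m := by omega
  rw [e] at h
  rw [← h]
  apply Finset.sum_nbij' (i := fun k => ((m - k, k - 1) : ℕ × ℕ)) (j := fun p => p.2 + 1)
  · intro k hk
    simp only [Finset.mem_Icc] at hk
    simp only [Finset.HasAntidiagonal.mem_antidiagonal]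
    omega
  · rintro ⟨a, b⟩ hp
    simp only [Finset.HasAntidiagonal.mem_antidiagonal] at hp
    simp only [Finset.mem_Icc]
    omega
  · intro k hk
    simp only [Finset.mem_Icc] at hk
    simp only
    omega
  · rintro ⟨a, b⟩ hp
    simp only [Finset.HasAntidiagonal.mem_antidiagonal] at hp
    simp only [Prod.mk.injEq]
    omega
  · intro k hk
    rfl

open Polynomial

open Polynomial in
lemma psi_deg (m k : ℕ) :
    ((((m - k).factorial : ℝ))⁻¹ • ((ascPochhammer ℝ (m - k)).comp (X + 1))).natDegree
      ≤ m - k := by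
  refine le_trans (natDegree_smul_le _ _) ?_
  rw [natDegree_comp]
  have h1 : (X + 1 : ℝ[X]).natDegree = 1 := by
    simpa using natDegree_X_add_C (1 : ℝ)
  rw [h1, ascPochhammer_natDegree, mul_one]

open Polynomial in
lemma psi_eval (m k r : ℕ) :
    ((((m - k).factorial : ℝ))⁻¹ • ((ascPochhammer ℝ (m - k)).comp (X + 1))).eval (r : ℝ)
      = ((r + (m - k)).choose (m - k) : ℝ) := by
  set d := m - k
  rw [eval_smul, eval_comp]
  have h1 : (X + 1 : ℝ[X]).eval (r : ℝ) = ((r + 1 : ℕ) : ℝ) := by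
    push_cast; simp
  rw [h1]
  have h2 : (ascPochhammer ℝ d).eval (((r + 1 : ℕ) : ℝ))
      = (((ascPochhammer ℕ d).eval (r + 1) : ℕ) : ℝ) := by
    rw [ascPochhammer_eval_cast]
  rw [h2, ascPochhammer_nat_eq_ascFactorial, Nat.ascFactorial_eq_factorial_mul_choose]
  have h3 : ((d.factorial : ℝ)) ≠ 0 := by positivity
  push_cast
  simp only [smul_eq_mul]
  field_simp

lemma fourier_nat_pow (n : ℕ) (θ : AddCircle (2 * π)) :
    fourier (n : ℤ) θ = (fourier 1 θ) ^ n := by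
  induction n with
  | zero => simp [fourier_zero]
  | succ n ih =>
    have h : ((n + 1 : ℕ) : ℤ) = (n : ℤ) + 1 := by push_cast; ring
    rw [h, pow_succ, ← ih, ← fourier_add]

lemma fourier_neg_nat_pow (n : ℕ) (θ : AddCircle (2 * π)) :
    fourier (-(n : ℤ)) θ = (conj (fourier 1 θ)) ^ n := by
  rw [fourier_neg, fourier_nat_pow, map_pow]

abbrev TLP : C(AddCircle (2 * π), ℂ) →L[ℂ] Ltwo :=
  ContinuousMap.toLp 2 AddCircle.haarAddCircle ℂ

lemma toLp2_coe (F : C(AddCircle (2 * π), ℂ)) :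
    toLp2 ⇑F = TLP F := by
  have hco : TLP F =ᵐ[AddCircle.haarAddCircle] ⇑F :=
    ContinuousMap.coeFn_toLp AddCircle.haarAddCircle F
  have hF : MemLp ⇑F 2 AddCircle.haarAddCircle := (Lp.memLp _).ae_eq hco
  rw [toLp2, dif_pos hF]
  exact Lp.ext ((hF.coeFn_toLp).trans hco.symm)

lemma lemA (c : ℕ → ℂ) (d : ℕ → ℤ) (hc : Summable (fun n => ‖c n‖))
    (F : C(AddCircle (2 * π), ℂ))
    (hpt : ∀ θ, HasSum (fun n => c n * fourier (d n) θ) (F θ)) (u : ℤ) :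
    HasSum (fun n => c n * (if d n = u then 1 else 0))
      (fourierBasis.repr (toLp2 ⇑F) u) := by
  have hnorm : ∀ n, ‖c n • (fourier (d n) : C(AddCircle (2 * π), ℂ))‖ = ‖c n‖ := by
    intro n
    rw [norm_smul, fourier_norm, mul_one]
  have hsC : Summable (fun n => c n • (fourier (d n) : C(AddCircle (2 * π), ℂ))) := by
    apply Summable.of_norm
    simpa only [hnorm] using hc
  obtain ⟨F₀, hF₀⟩ := hsC
  have hFF : F₀ = F := by
    ext θ
    have h2 : HasSum (fun n => c n * fourier (d n) θ) (F₀ θ) := by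
      have h3 := hF₀.mapL (ContinuousMap.evalCLM ℂ θ)
      convert h3 using 1 <;> rfl
    exact h2.unique (hpt θ)
  rw [hFF] at hF₀
  have hL2 : HasSum (fun n => c n • ((fourierLp 2 (d n)) : Ltwo)) (toLp2 ⇑F) := by
    rw [toLp2_coe F]
    have h4 := hF₀.mapL TLP
    have h5 : (fun n => c n • ((fourierLp 2 (d n)) : Ltwo))
        = fun n => TLP (c n • fourier (d n)) := by
      funext n
      rw [_root_.map_smul]
    rw [h5]
    exact h4
  have hval := fourierBasis.repr_apply_apply (toLp2 ⇑F) u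
  rw [hval]
  have hIn := hL2.mapL (innerSL ℂ ((fourierBasis : HilbertBasis ℤ ℂ Ltwo) u))
  have hfun : (fun n => (innerSL ℂ ((fourierBasis : HilbertBasis ℤ ℂ Ltwo) u))
      (c n • ((fourierLp 2 (d n)) : Ltwo)))
      = fun n => c n * (if d n = u then 1 else 0) := by
    funext n
    rw [innerSL_apply_apply, inner_smul_right]
    have hb : ((fourierLp 2 (d n)) : Ltwo) = (fourierBasis : HilbertBasis ℤ ℂ Ltwo) (d n) :=
      (congrFun coe_fourierBasis (d n)).symm
    rw [hb]
    have horth := orthonormal_iff_ite.mp (fourierBasis (T := 2 * π)).orthonormal u (d n)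
    rw [horth]
    by_cases h : d n = u
    · simp [h]
    · simp [h, Ne.symm h]
  rw [hfun] at hIn
  exact hIn

lemma piMinus_repr (ψ : Ltwo) (u : ℤ) :
    fourierBasis.repr (piMinus ψ) u
      = if u < 0 then fourierBasis.repr ψ u else 0 := by
  classical
  set x := fourierBasis.repr ψ with hx
  have hq : Memℓp (fun v : ℤ => if v < 0 then x v else 0) 2 := by
    apply memℓp_gen
    have hx2 : Summable (fun v : ℤ => ‖x v‖ ^ (2 : ℝ≥0∞).toReal) :=
      (lp.memℓp x).summable (by norm_num)
    apply hx2.of_nonneg_of_le (fun v => by positivity)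
    intro v
    by_cases h : v < 0
    · simp [h]
    · simp only [h, if_false, norm_zero]
      rw [Real.zero_rpow (by norm_num)]
      positivity
  set Y : lp (fun _ : ℤ => ℂ) 2 := ⟨_, hq⟩ with hY
  have hsum := (fourierBasis (T := 2 * π)).hasSum_repr_symm Y
  have hpm : piMinus ψ = fourierBasis.repr.symm Y := by
    rw [piMinus]
    have heq : (fun v : ℤ => if v < 0 then fourierBasis.repr ψ v • (fourierBasis v : Ltwo) else 0)
        = fun v => Y v • (fourierBasis v : Ltwo) := by
      funext v
      by_cases h : v < 0 <;> simp [hY, h, ← hx]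
    rw [heq, hsum.tsum_eq]
  rw [hpm, LinearIsometryEquiv.apply_symm_apply]



/-- For every integer m ≥ 1 there exist polynomials ψ_{1,m},…,ψ_{m,m} with
deg ψ_{k,m} ≤ m−k, independent of α and r, such that for every complex α with
0 < |α| < 1 and every integer r ≥ 0, the following identity holds in L²(𝕋):
π₋( χ^r (1 − α·conj(χ))^{−m} ) =
  α^{r+1} · conj(χ) · Σ_{k=1}^{m} ψ_{k,m}(r) · (1 − α·conj(χ))^{−k}. -/
theorem stmt13 (m : ℕ) (hm : 1 ≤ m) :
    ∃ ψp : ℕ → Polynomial ℝ,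
      (∀ k, 1 ≤ k → k ≤ m → (ψp k).natDegree ≤ m - k) ∧
      ∀ α : ℂ, 0 < ‖α‖ → ‖α‖ < 1 → ∀ r : ℕ,
        piMinus (toLp2 (fun θ =>
            (fourier 1 θ) ^ r * ((1 - α * conj (fourier 1 θ))⁻¹) ^ m)) =
          toLp2 (fun θ =>
            α ^ (r + 1) * conj (fourier 1 θ) *
              ∑ k ∈ Finset.Icc 1 m,
                (((ψp k).eval (r : ℝ) : ℝ) : ℂ) * ((1 - α * conj (fourier 1 θ))⁻¹) ^ k) := by
  classical
  refine ⟨fun k => (((m - k).factorial : ℝ))⁻¹ • ((ascPochhammer ℝ (m - k)).comp (Polynomial.X + 1)),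
    fun k _ _ => psi_deg m k, ?_⟩
  intro α hα0 hα1 r
  have hα1' : ‖α‖ < 1 := by exact hα1
  have hf1 : ∀ θ : AddCircle (2 * π), ‖(fourier 1 θ : ℂ)‖ = 1 := fun θ => Circle.norm_coe _
  have hwnorm : ∀ θ : AddCircle (2 * π), ‖α * conj (fourier 1 θ)‖ < 1 := by
    intro θ
    rw [norm_mul, RCLike.norm_conj, hf1, mul_one]
    exact hα1'
  have hne : ∀ θ : AddCircle (2 * π), (1 : ℂ) - α * conj (fourier 1 θ) ≠ 0 := by
    intro θ h
    have h1 : (1 : ℂ) = α * conj (fourier 1 θ) := by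
      have := sub_eq_zero.mp h
      exact this
    have h2 := hwnorm θ
    rw [← h1] at h2
    simp at h2
  -- the continuous functions
  have hcont_inv : Continuous fun θ : AddCircle (2 * π) => ((1 : ℂ) - α * conj (fourier 1 θ))⁻¹ := by
    apply Continuous.inv₀ _ hne
    exact continuous_const.sub (continuous_const.mul (Complex.continuous_conj.comp
      (map_continuous (fourier 1))))
  set F : C(AddCircle (2 * π), ℂ) :=
    ⟨fun θ => (fourier 1 θ : ℂ) ^ r * ((1 - α * conj (fourier 1 θ))⁻¹) ^ m,
      ((map_continuous (fourier 1)).pow r).mul (hcont_inv.pow m)⟩ with hF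
  set G : C(AddCircle (2 * π), ℂ) :=
    ⟨fun θ => α ^ (r + 1) * conj (fourier 1 θ) *
        ∑ k ∈ Finset.Icc 1 m,
          ((((((m - k).factorial : ℝ))⁻¹ •
            ((ascPochhammer ℝ (m - k)).comp (Polynomial.X + 1))).eval (r : ℝ) : ℝ) : ℂ) *
            ((1 - α * conj (fourier 1 θ))⁻¹) ^ k,
      (continuous_const.mul (Complex.continuous_conj.comp (map_continuous (fourier 1)))).mul
        (continuous_finset_sum _ fun k _ => continuous_const.mul (hcont_inv.pow k))⟩ with hG
  show piMinus (toLp2 ⇑F) = toLp2 ⇑G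
  -- coefficient sequences
  set ψc : ℕ → ℂ := fun k => ((r + (m - k)).choose (m - k) : ℂ) with hψc
  have hψeval : ∀ k, ((((((m - k).factorial : ℝ))⁻¹ •
      ((ascPochhammer ℝ (m - k)).comp (Polynomial.X + 1))).eval (r : ℝ) : ℝ) : ℂ) = ψc k := by
    intro k
    rw [psi_eval m k r, hψc]
    push_cast
    ring
  set cL : ℕ → ℂ := fun n => ((n + (m - 1)).choose (m - 1) : ℂ) * α ^ n with hcL
  set cG : ℕ → ℂ := fun n =>
    α ^ (r + 1) * (∑ k ∈ Finset.Icc 1 m, ψc k * ((n + (k - 1)).choose (k - 1) : ℂ)) * α ^ n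
    with hcG
  -- summability of cL norms
  have hcLs : Summable fun n => ‖cL n‖ := by
    have h1 : ∀ n : ℕ, ‖cL n‖ = ((n + (m - 1)).choose (m - 1) : ℝ) * ‖α‖ ^ n := by
      intro n
      rw [hcL]
      simp only [norm_mul, norm_pow, Complex.norm_natCast]
    refine Summable.congr ?_ (fun n => (h1 n).symm)
    exact summable_choose_mul_geometric_of_norm_lt_one (m - 1) (by simpa using hα1')
  -- summability of cG norms
  have hsumk : ∀ k : ℕ, Summable fun n : ℕ =>
      ‖ψc k‖ * (((n + (k - 1)).choose (k - 1) : ℝ) * ‖α‖ ^ n) := by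
    intro k
    exact (summable_choose_mul_geometric_of_norm_lt_one (R := ℝ) (k - 1) (by simpa using hα1')).mul_left _
  have hcGs : Summable fun n => ‖cG n‖ := by
    have hg : Summable fun n : ℕ => ‖α‖ ^ (r + 1) *
        ∑ k ∈ Finset.Icc 1 m, ‖ψc k‖ * (((n + (k - 1)).choose (k - 1) : ℝ) * ‖α‖ ^ n) :=
      (summable_sum fun k _ => hsumk k).mul_left _
    refine Summable.of_nonneg_of_le (fun n => norm_nonneg _) (fun n => ?_) hg
    rw [hcG]
    simp only [norm_mul, norm_pow]
    have hb : ‖∑ k ∈ Finset.Icc 1 m, ψc k * ((n + (k - 1)).choose (k - 1) : ℂ)‖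
        ≤ ∑ k ∈ Finset.Icc 1 m, ‖ψc k‖ * ((n + (k - 1)).choose (k - 1) : ℝ) := by
      refine (norm_sum_le _ _).trans_eq ?_
      refine Finset.sum_congr rfl fun k _ => ?_
      simp [hψc, Complex.norm_natCast, norm_mul]
    calc ‖α‖ ^ (r + 1) * ‖∑ k ∈ Finset.Icc 1 m, ψc k * ((n + (k - 1)).choose (k - 1) : ℂ)‖
          * ‖α‖ ^ n
        ≤ ‖α‖ ^ (r + 1) * (∑ k ∈ Finset.Icc 1 m, ‖ψc k‖ * ((n + (k - 1)).choose (k - 1) : ℝ))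
          * ‖α‖ ^ n := by
          apply mul_le_mul_of_nonneg_right _ (by positivity)
          exact mul_le_mul_of_nonneg_left hb (by positivity)
      _ = ‖α‖ ^ (r + 1) *
          ∑ k ∈ Finset.Icc 1 m, ‖ψc k‖ * (((n + (k - 1)).choose (k - 1) : ℝ) * ‖α‖ ^ n) := by
          rw [mul_assoc, Finset.sum_mul]
          congr 1
          refine Finset.sum_congr rfl fun k _ => ?_
          ring
  -- pointwise sums
  have hptL : ∀ θ, HasSum (fun n => cL n * fourier ((r : ℤ) - n) θ) (F θ) := by
    intro θ
    have h0 := hasSum_choose_mul_geometric_of_norm_lt_one (𝕜 := ℂ) (m - 1) (hwnorm θ)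
    rw [show m - 1 + 1 = m from by omega] at h0
    have h1 := h0.mul_left ((fourier 1 θ : ℂ) ^ r)
    have hfun : (fun n : ℕ => (fourier 1 θ : ℂ) ^ r *
        (((n + (m - 1)).choose (m - 1) : ℂ) * (α * conj (fourier 1 θ)) ^ n))
        = fun n => cL n * fourier ((r : ℤ) - n) θ := by
      funext n
      rw [sub_eq_add_neg, fourier_add, fourier_nat_pow, fourier_neg_nat_pow]
      simp only [hcL]
      rw [mul_pow]
      ring
    have hval : (fourier 1 θ : ℂ) ^ r * (1 / (1 - α * conj (fourier 1 θ)) ^ m) = F θ := by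
      show _ = (fourier 1 θ : ℂ) ^ r * ((1 - α * conj (fourier 1 θ))⁻¹) ^ m
      rw [one_div, inv_pow]
    rw [hfun, hval] at h1
    exact h1
  have hptG : ∀ θ, HasSum (fun n => cG n * fourier (-(n : ℤ) - 1) θ) (G θ) := by
    intro θ
    have hk : ∀ k ∈ Finset.Icc 1 m,
        HasSum (fun n : ℕ => (α ^ (r + 1) * conj (fourier 1 θ) * ψc k) *
          (((n + (k - 1)).choose (k - 1) : ℂ) * (α * conj (fourier 1 θ)) ^ n))
          ((α ^ (r + 1) * conj (fourier 1 θ) * ψc k) *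
            (1 / (1 - α * conj (fourier 1 θ)) ^ k)) := by
      intro k hkm
      simp only [Finset.mem_Icc] at hkm
      have h0 := hasSum_choose_mul_geometric_of_norm_lt_one (𝕜 := ℂ) (k - 1) (hwnorm θ)
      rw [show k - 1 + 1 = k from by omega] at h0
      exact h0.mul_left _
    have hsum := hasSum_sum hk
    have hfun : (fun n : ℕ => ∑ k ∈ Finset.Icc 1 m,
        (α ^ (r + 1) * conj (fourier 1 θ) * ψc k) *
          (((n + (k - 1)).choose (k - 1) : ℂ) * (α * conj (fourier 1 θ)) ^ n))
        = fun n => cG n * fourier (-(n : ℤ) - 1) θ := by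
      funext n
      have he : -(n : ℤ) - 1 = -((n + 1 : ℕ) : ℤ) := by push_cast; ring
      rw [he, fourier_neg_nat_pow]
      simp only [hcG]
      rw [Finset.mul_sum, Finset.sum_mul, Finset.sum_mul]
      refine Finset.sum_congr rfl fun k _ => ?_
      ring
    have hval : (∑ k ∈ Finset.Icc 1 m, (α ^ (r + 1) * conj (fourier 1 θ) * ψc k) *
        (1 / (1 - α * conj (fourier 1 θ)) ^ k)) = G θ := by
      show _ = α ^ (r + 1) * conj (fourier 1 θ) *
        ∑ k ∈ Finset.Icc 1 m, _ * ((1 - α * conj (fourier 1 θ))⁻¹) ^ k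
      rw [Finset.mul_sum]
      refine Finset.sum_congr rfl fun k _ => ?_
      rw [hψeval k, one_div, inv_pow]
      ring
    rw [hfun, hval] at hsum
    exact hsum
  have hLc := lemA cL (fun n => (r : ℤ) - n) hcLs F hptL
  have hGc := lemA cG (fun n => -(n : ℤ) - 1) hcGs G hptG
  -- conclude by comparing coefficients
  apply fourierBasis.repr.injective
  apply lp.ext
  funext u
  show fourierBasis.repr (piMinus (toLp2 ⇑F)) u = fourierBasis.repr (toLp2 ⇑G) u
  rw [piMinus_repr]
  by_cases hu : u < 0
  · rw [if_pos hu]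
    set n₀ : ℕ := (-u - 1).toNat with hn₀
    have hu' : u = -(n₀ : ℤ) - 1 := by omega
    -- LHS value
    have hfL : (fun n : ℕ => cL n * (if (r : ℤ) - n = u then 1 else 0))
        = fun n => if n = r + n₀ + 1 then cL (r + n₀ + 1) else 0 := by
      funext n
      by_cases h : n = r + n₀ + 1
      · subst h
        have hc : (r : ℤ) - ((r : ℤ) + (n₀ : ℤ) + 1) = u := by omega
        simp [hc]
      · have hc : ¬((r : ℤ) - n = u) := by
          intro hcon
          apply h
          omega
        simp [h, hc]
    have hL := hLc u
    rw [hfL] at hL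
    have hLval := (hasSum_ite_eq (r + n₀ + 1) (cL (r + n₀ + 1))).unique hL
    -- RHS value
    have hfG : (fun n : ℕ => cG n * (if -(n : ℤ) - 1 = u then 1 else 0))
        = fun n => if n = n₀ then cG n₀ else 0 := by
      funext n
      by_cases h : n = n₀
      · subst h
        have hc : -((n₀ : ℕ) : ℤ) - 1 = u := by omega
        simp [hc]
      · have hc : ¬(-(n : ℤ) - 1 = u) := by
          intro hcon
          apply h
          omega
        simp [h, hc]
    have hGv := hGc u
    rw [hfG] at hGv
    have hGval := (hasSum_ite_eq n₀ (cG n₀)).unique hGv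
    rw [← hLval, ← hGval]
    -- the combinatorial identity
    have hid := icc_sum m hm r n₀
    have hidC := congrArg (Nat.cast : ℕ → ℂ) hid
    push_cast at hidC
    simp only [hcL, hcG, hψc]
    rw [hidC]
    rw [show r + n₀ + 1 + (m - 1) = r + n₀ + m from by omega]
    rw [show r + n₀ + 1 = (r + 1) + n₀ from by omega, pow_add]
    ring
  · rw [if_neg hu]
    have hGv := hGc u
    have hf0 : (fun n : ℕ => cG n * (if -(n : ℤ) - 1 = u then 1 else 0)) = fun _ => 0 := by
      funext n
      have : ¬(-(n : ℤ) - 1 = u) := by omega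
      simp [this]
    rw [hf0] at hGv
    exact hasSum_zero.unique hGv

end
end

section
/- Let λ′ ∈ [0,2] and set χ_{λ′} = (1 − λ′) + i√(1 − (λ′ − 1)²). Then |χ_{λ′}| = 1, and for every real θ: (1 − cos θ) − λ′ = (1/2) · χ_{λ′} · (1 − conj(χ_{λ′}) e^{iθ}) · (1 − conj(χ_{λ′}) e^{−iθ}). -/
open Complex Real
open scoped ComplexConjugate

/-- Let λ′ ∈ [0,2] and set χ_{λ′} = (1 − λ′) + i√(1 − (λ′ − 1)²). Then |χ_{λ′}| = 1, and
for every real θ: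
(1 − cos θ) − λ′ = (1/2) · χ_{λ′} · (1 − conj(χ_{λ′}) e^{iθ}) · (1 − conj(χ_{λ′}) e^{−iθ}). -/
theorem stmt14 (lam : ℝ) (hlam : lam ∈ Set.Icc (0 : ℝ) 2)
    (ω : ℂ) (hω : ω = ((1 - lam : ℝ) : ℂ) + (Real.sqrt (1 - (lam - 1) ^ 2) : ℝ) * Complex.I) :
    ‖ω‖ = 1 ∧
    ∀ θ : ℝ,
      (((1 - Real.cos θ) - lam : ℝ) : ℂ) =
        (1 / 2) * ω * (1 - conj ω * Complex.exp (θ * Complex.I))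
          * (1 - conj ω * Complex.exp (-θ * Complex.I)) := by
  obtain ⟨h0, h2⟩ := hlam
  have hb : Real.sqrt (1 - (lam - 1) ^ 2) ^ 2 = 1 - (lam - 1) ^ 2 :=
    Real.sq_sqrt (by nlinarith)
  have hconj : conj ω = ((1 - lam : ℝ) : ℂ) - (Real.sqrt (1 - (lam - 1) ^ 2) : ℝ) * Complex.I := by
    rw [hω]; simp [Complex.ext_iff]
  have hmul : ω * conj ω = 1 := by
    rw [hconj, hω]
    have : ((Real.sqrt (1 - (lam - 1) ^ 2) : ℝ) : ℂ) ^ 2 = ((1 - (lam - 1) ^ 2 : ℝ) : ℂ) := by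
      rw [← Complex.ofReal_pow, hb]
    push_cast at this ⊢
    linear_combination (-Complex.I ^ 2) * this - (1 - ((lam : ℂ) - 1) ^ 2) * Complex.I_sq
  have habs : ‖ω‖ = 1 := by
    have := Complex.mul_conj ω
    rw [hmul] at this
    have hn : Complex.normSq ω = 1 := by
      exact_mod_cast this.symm
    rw [Complex.norm_def, hn, Real.sqrt_one]
  refine ⟨habs, fun θ => ?_⟩
  have hsum : ω + conj ω = 2 * ((1 - lam : ℝ) : ℂ) := by rw [hconj, hω]; ring
  have hEF : Complex.exp (θ * Complex.I) * Complex.exp (-θ * Complex.I) = 1 := by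
    rw [← Complex.exp_add]; ring_nf; exact Complex.exp_zero
  have hcos : Complex.cos θ =
      (Complex.exp (θ * Complex.I) + Complex.exp (-θ * Complex.I)) / 2 := by
    rw [Complex.cos, neg_mul]
  set E := Complex.exp (θ * Complex.I)
  set F := Complex.exp (-θ * Complex.I)
  set c := conj ω
  push_cast at hsum ⊢
  linear_combination (-1 : ℂ) * hcos + (E / 2 + F / 2 - c / 2) * hmul - (ω * c ^ 2 / 2) * hEF -
    (1 / 2) * hsum
end

section
/- Let α, β ∈ ℂ with |α| < 1 and |β| < 1, and let t, h ≥ 1 be integers. Then there exists a constant C > 0 such that for all integers k, l with 0 ≤ k ≤ l: |Σ_{u=0}^{k} τ_t(u) · τ_h(l−k+u) · α^u · β^{l−k+u}| ≤ C (1+l)^{h−1} |β|^{l−k}. In particular, for any ρ with max(|α|,|β|) ≤ ρ < 1 and any a ∈ (0,1), this sum is o(ρ^{a(l−k)}) as l−k → ∞. -/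
open Finset Filter Topology

/-- For an integer `m ≥ 1`, `τ_m(u) = (u+1)(u+2)⋯(u+m−1)`, with `τ_1(u) = 1`. -/
def tau (m u : ℕ) : ℕ := ∏ i ∈ Finset.Ico 1 m, (u + i)

lemma tau_le_real (m u : ℕ) : (tau m u : ℝ) ≤ ((m : ℝ) * (1 + u)) ^ (m - 1) := by
  rw [tau]
  push_cast
  calc (∏ i ∈ Finset.Ico 1 m, ((u : ℝ) + i))
      ≤ ∏ _i ∈ Finset.Ico 1 m, ((m : ℝ) * (1 + u)) := by
        apply Finset.prod_le_prod
        · intro i _; positivity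
        · intro i hi
          rw [Finset.mem_Ico] at hi
          have h1 : 1 ≤ i := hi.1
          have h2 : i < m := hi.2
          have : (i : ℝ) ≤ m := by exact_mod_cast h2.le
          have hm1 : (1 : ℝ) ≤ m := by exact_mod_cast h1.trans h2.le
          nlinarith [Nat.cast_nonneg (α := ℝ) u]
    _ = ((m : ℝ) * (1 + u)) ^ (m - 1) := by
        rw [Finset.prod_const, Nat.card_Ico]

lemma one_add_pow_le (p m : ℕ) : ((1 : ℝ) + m) ^ p ≤ 2 ^ p * ((m : ℝ) ^ p + 1) := by
  calc ((1 : ℝ) + m) ^ p = ((m : ℝ) + 1) ^ p := by ring_nf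
    _ ≤ 2 ^ (p - 1) * ((m : ℝ) ^ p + 1 ^ p) := add_pow_le (Nat.cast_nonneg m) zero_le_one p
    _ ≤ 2 ^ p * ((m : ℝ) ^ p + 1) := by
        rw [one_pow]
        have h2 : (2 : ℝ) ^ (p - 1) ≤ 2 ^ p := pow_le_pow_right₀ one_le_two (Nat.sub_le p 1)
        have hnn : (0:ℝ) ≤ (m : ℝ) ^ p + 1 := by positivity
        exact mul_le_mul_of_nonneg_right h2 hnn

lemma aux_tendsto (C : ℝ) (p : ℕ) {s : ℝ} (h0 : 0 ≤ s) (h1 : s < 1) (hC : 0 ≤ C) :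
    Tendsto (fun m : ℕ => C * ((1 : ℝ) + m) ^ p * s ^ m) atTop (𝓝 0) := by
  have h1' := tendsto_pow_const_mul_const_pow_of_lt_one p h0 h1
  have h2' := tendsto_pow_atTop_nhds_zero_of_lt_one h0 h1
  have hg : Tendsto (fun m : ℕ => C * 2 ^ p * ((m : ℝ) ^ p * s ^ m + s ^ m)) atTop (𝓝 0) := by
    have := (h1'.add h2').const_mul (C * 2 ^ p)
    simpa using this
  apply squeeze_zero (fun m => by positivity) _ hg
  intro m
  have hb := one_add_pow_le p m
  have hs : (0:ℝ) ≤ s ^ m := by positivity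
  calc C * ((1 : ℝ) + m) ^ p * s ^ m ≤ C * (2 ^ p * ((m : ℝ) ^ p + 1)) * s ^ m := by
        apply mul_le_mul_of_nonneg_right _ hs
        exact mul_le_mul_of_nonneg_left hb hC
    _ = C * 2 ^ p * ((m : ℝ) ^ p * s ^ m + s ^ m) := by ring

lemma key (α β : ℂ) (hα : norm α < 1) (hβ : norm β < 1)
    (t h : ℕ) (ht : 1 ≤ t) (hh : 1 ≤ h) :
    ∃ C : ℝ, 0 < C ∧ ∀ k d : ℕ,
      norm (∑ u ∈ Finset.range (k + 1),
          (tau t u : ℂ) * (tau h (d + u) : ℂ) * α ^ u * β ^ (d + u)) ≤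
        C * ((1 : ℝ) + d) ^ (h - 1) * (norm β) ^ d := by
  set r : ℝ := norm α * norm β with hr_def
  have hr0 : 0 ≤ r := mul_nonneg (norm_nonneg _) (norm_nonneg _)
  have hr1 : r < 1 := by
    calc r ≤ norm α * 1 := mul_le_mul_of_nonneg_left hβ.le (norm_nonneg _)
      _ = norm α := mul_one _
      _ < 1 := hα
  set f : ℕ → ℝ := fun u => (tau t u : ℝ) * ((1 : ℝ) + u) ^ (h - 1) * r ^ u with hf_def
  have hf0 : ∀ u, 0 ≤ f u := fun u => by positivity
  have hsum : Summable f := by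
    have hbig : Summable (fun u : ℕ =>
        ((t : ℝ) ^ (t - 1) * 2 ^ (t - 1 + (h - 1))) *
          ((u : ℝ) ^ (t - 1 + (h - 1)) * r ^ u + r ^ u)) := by
      have hs1 : Summable (fun u : ℕ => (u : ℝ) ^ (t - 1 + (h - 1)) * r ^ u) := by
        have : ‖r‖ < 1 := by rwa [Real.norm_eq_abs, abs_of_nonneg hr0]
        exact summable_pow_mul_geometric_of_norm_lt_one _ this
      have hs2 : Summable (fun u : ℕ => r ^ u) := summable_geometric_of_lt_one hr0 hr1
      exact (hs1.add hs2).mul_left _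
    apply Summable.of_nonneg_of_le hf0 _ hbig
    intro u
    have hb1 : (tau t u : ℝ) ≤ ((t : ℝ) * (1 + u)) ^ (t - 1) := tau_le_real t u
    have hru : (0:ℝ) ≤ r ^ u := by positivity
    calc f u ≤ ((t : ℝ) * (1 + u)) ^ (t - 1) * ((1 : ℝ) + u) ^ (h - 1) * r ^ u := by
          apply mul_le_mul_of_nonneg_right _ hru
          exact mul_le_mul_of_nonneg_right hb1 (by positivity)
      _ = (t : ℝ) ^ (t - 1) * ((1 : ℝ) + u) ^ (t - 1 + (h - 1)) * r ^ u := by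
          rw [mul_pow, pow_add]; ring
      _ ≤ (t : ℝ) ^ (t - 1) * (2 ^ (t - 1 + (h - 1)) * ((u : ℝ) ^ (t - 1 + (h - 1)) + 1)) * r ^ u := by
          apply mul_le_mul_of_nonneg_right _ hru
          exact mul_le_mul_of_nonneg_left (one_add_pow_le _ u) (by positivity)
      _ = ((t : ℝ) ^ (t - 1) * 2 ^ (t - 1 + (h - 1))) *
            ((u : ℝ) ^ (t - 1 + (h - 1)) * r ^ u + r ^ u) := by ring
  set D : ℝ := ∑' u, f u with hD_def
  have hD0 : 0 ≤ D := tsum_nonneg hf0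
  refine ⟨(D + 1) * (h : ℝ) ^ (h - 1), by positivity, ?_⟩
  intro k d
  have hβ0 : (0:ℝ) ≤ norm β := norm_nonneg _
  have step1 : norm (∑ u ∈ Finset.range (k + 1),
      (tau t u : ℂ) * (tau h (d + u) : ℂ) * α ^ u * β ^ (d + u)) ≤
      ∑ u ∈ Finset.range (k + 1),
        (h : ℝ) ^ (h - 1) * ((1 : ℝ) + d) ^ (h - 1) * (norm β) ^ d * f u := by
    refine le_trans (norm_sum_le _ _) (Finset.sum_le_sum ?_)
    intro u _
    have htau_h : (tau h (d + u) : ℝ) ≤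
        (h : ℝ) ^ (h - 1) * ((1 : ℝ) + d) ^ (h - 1) * ((1 : ℝ) + u) ^ (h - 1) := by
      calc (tau h (d + u) : ℝ) ≤ ((h : ℝ) * (1 + (d + u : ℕ))) ^ (h - 1) := tau_le_real h (d + u)
        _ ≤ ((h : ℝ) * ((1 + d) * (1 + u))) ^ (h - 1) := by
            apply pow_le_pow_left₀ (by positivity)
            apply mul_le_mul_of_nonneg_left _ (Nat.cast_nonneg h)
            push_cast
            nlinarith [Nat.cast_nonneg (α := ℝ) d, Nat.cast_nonneg (α := ℝ) u]
        _ = (h : ℝ) ^ (h - 1) * ((1 : ℝ) + d) ^ (h - 1) * ((1 : ℝ) + u) ^ (h - 1) := by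
            rw [mul_pow, mul_pow]; ring
    calc norm ((tau t u : ℂ) * (tau h (d + u) : ℂ) * α ^ u * β ^ (d + u))
        = (tau t u : ℝ) * (tau h (d + u) : ℝ) * (norm α) ^ u *
            ((norm β) ^ d * (norm β) ^ u) := by
          rw [norm_mul, norm_mul, norm_mul, norm_pow, norm_pow, Complex.norm_natCast,
            Complex.norm_natCast, pow_add]
      _ = (tau t u : ℝ) * (tau h (d + u) : ℝ) * (norm β) ^ d * r ^ u := by
          rw [hr_def, mul_pow]; ring
      _ ≤ (tau t u : ℝ) * ((h : ℝ) ^ (h - 1) * ((1 : ℝ) + d) ^ (h - 1) *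
            ((1 : ℝ) + u) ^ (h - 1)) * (norm β) ^ d * r ^ u := by
          have : (0:ℝ) ≤ r ^ u := by positivity
          have h2 : (0:ℝ) ≤ (norm β) ^ d := by positivity
          apply mul_le_mul_of_nonneg_right _ this
          apply mul_le_mul_of_nonneg_right _ h2
          exact mul_le_mul_of_nonneg_left htau_h (Nat.cast_nonneg _)
      _ = (h : ℝ) ^ (h - 1) * ((1 : ℝ) + d) ^ (h - 1) * (norm β) ^ d * f u := by
          rw [hf_def]; ring
  have step2 : ∑ u ∈ Finset.range (k + 1), f u ≤ D :=
    Summable.sum_le_tsum _ (fun u _ => hf0 u) hsum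
  calc norm (∑ u ∈ Finset.range (k + 1),
      (tau t u : ℂ) * (tau h (d + u) : ℂ) * α ^ u * β ^ (d + u))
      ≤ (h : ℝ) ^ (h - 1) * ((1 : ℝ) + d) ^ (h - 1) * (norm β) ^ d *
          ∑ u ∈ Finset.range (k + 1), f u := by
        rw [← Finset.mul_sum] at step1; exact step1
    _ ≤ (h : ℝ) ^ (h - 1) * ((1 : ℝ) + d) ^ (h - 1) * (norm β) ^ d * (D + 1) := by
        apply mul_le_mul_of_nonneg_left (step2.trans (by linarith)) (by positivity)
    _ = (D + 1) * (h : ℝ) ^ (h - 1) * ((1 : ℝ) + d) ^ (h - 1) * (norm β) ^ d := by ring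

/-- Let α, β ∈ ℂ with |α| < 1 and |β| < 1, and let t, h ≥ 1 be integers. Then there exists
a constant C > 0 such that for all integers k, l with 0 ≤ k ≤ l:
|Σ_{u=0}^{k} τ_t(u) · τ_h(l−k+u) · α^u · β^{l−k+u}| ≤ C (1+l)^{h−1} |β|^{l−k}.
In particular, for any ρ with max(|α|,|β|) ≤ ρ < 1 and any a ∈ (0,1), this sum is
o(ρ^{a(l−k)}) as l−k → ∞. -/
theorem stmt17 (α β : ℂ) (hα : norm α < 1) (hβ : norm β < 1)
    (t h : ℕ) (ht : 1 ≤ t) (hh : 1 ≤ h) :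
    (∃ C : ℝ, 0 < C ∧ ∀ k l : ℕ, k ≤ l →
      norm (∑ u ∈ Finset.range (k + 1),
          (tau t u : ℂ) * (tau h (l - k + u) : ℂ) * α ^ u * β ^ (l - k + u)) ≤
        C * ((1 : ℝ) + l) ^ (h - 1) * (norm β) ^ (l - k)) ∧
    ∀ ρ : ℝ, max (norm α) (norm β) ≤ ρ → ρ < 1 →
      ∀ a : ℝ, 0 < a → a < 1 →
        ∀ k l : ℕ → ℕ, (∀ n, k n ≤ l n) →
          Tendsto (fun n => l n - k n) atTop atTop →
          Tendsto (fun n =>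
              norm (∑ u ∈ Finset.range (k n + 1),
                  (tau t u : ℂ) * (tau h (l n - k n + u) : ℂ) * α ^ u * β ^ (l n - k n + u)) /
                ρ ^ (a * ((l n : ℝ) - (k n : ℝ)))) atTop (𝓝 0) := by
  obtain ⟨C, hC, hbound⟩ := key α β hα hβ t h ht hh
  constructor
  · refine ⟨C, hC, fun k l hkl => ?_⟩
    refine (hbound k (l - k)).trans ?_
    have h1 : ((1 : ℝ) + (l - k : ℕ)) ^ (h - 1) ≤ ((1 : ℝ) + l) ^ (h - 1) := by
      apply pow_le_pow_left₀ (by positivity)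
      have : ((l - k : ℕ) : ℝ) ≤ (l : ℝ) := by exact_mod_cast Nat.sub_le l k
      linarith
    have hb : (0:ℝ) ≤ (norm β) ^ (l - k) := by positivity
    exact mul_le_mul_of_nonneg_right (mul_le_mul_of_nonneg_left h1 hC.le) hb
  · intro ρ hρmax hρ1 a ha ha1 k l hkl hd
    have hρ0 : 0 ≤ ρ := le_trans (le_max_right _ _) hρmax |>.trans' (norm_nonneg β)
    have hβρ : norm β ≤ ρ := le_trans (le_max_right _ _) hρmax
    have hcast : ∀ n, (l n : ℝ) - (k n : ℝ) = ((l n - k n : ℕ) : ℝ) := by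
      intro n
      rw [Nat.cast_sub (hkl n)]
    rcases eq_or_lt_of_le hρ0 with hρz | hρpos
    · -- ρ = 0, hence β = 0
      have hβ0 : β = 0 := by
        have : norm β ≤ 0 := hβρ.trans_eq hρz.symm
        exact norm_eq_zero.mp (le_antisymm this (norm_nonneg β))
      apply Tendsto.congr' _ tendsto_const_nhds
      filter_upwards [hd.eventually_ge_atTop 1] with n hn
      have hz : ∀ u ∈ Finset.range (k n + 1),
          (tau t u : ℂ) * (tau h (l n - k n + u) : ℂ) * α ^ u * β ^ (l n - k n + u) = 0 := by
        intro u _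
        rw [hβ0, zero_pow (by omega), mul_zero]
      rw [Finset.sum_eq_zero hz]
      simp
    · -- ρ > 0
      set s : ℝ := ρ ^ ((1 : ℝ) - a) with hs_def
      have hs0 : 0 ≤ s := Real.rpow_nonneg hρ0 _
      have hs1 : s < 1 := Real.rpow_lt_one hρ0 hρ1 (by linarith)
      have hG := (aux_tendsto C (h - 1) hs0 hs1 hC.le).comp hd
      apply squeeze_zero _ _ hG
      · intro n
        apply div_nonneg (norm_nonneg _) (Real.rpow_nonneg hρ0 _)
      · intro n
        set d : ℕ := l n - k n with hd_def
        have hden : ρ ^ (a * ((l n : ℝ) - (k n : ℝ))) = (ρ ^ a) ^ d := by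
          rw [hcast n, ← hd_def, Real.rpow_mul hρ0, Real.rpow_natCast]
        have hρa : 0 < ρ ^ a := Real.rpow_pos_of_pos hρpos a
        have hdenpos : 0 < (ρ ^ a) ^ d := pow_pos hρa d
        rw [hden]
        have hsd : s ^ d = ρ ^ d / (ρ ^ a) ^ d := by
          rw [hs_def, ← div_pow]
          congr 1
          rw [Real.rpow_sub hρpos, Real.rpow_one]
        calc norm (∑ u ∈ Finset.range (k n + 1),
              (tau t u : ℂ) * (tau h (d + u) : ℂ) * α ^ u * β ^ (d + u)) / (ρ ^ a) ^ d
            ≤ (C * ((1 : ℝ) + d) ^ (h - 1) * (norm β) ^ d) / (ρ ^ a) ^ d := by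
              gcongr
              exact hbound (k n) d
          _ ≤ (C * ((1 : ℝ) + d) ^ (h - 1) * ρ ^ d) / (ρ ^ a) ^ d := by
              gcongr
          _ = C * ((1 : ℝ) + d) ^ (h - 1) * s ^ d := by
              rw [hsd]; ring
          _ = (fun m : ℕ => C * ((1 : ℝ) + m) ^ (h - 1) * s ^ m) ((fun n => l n - k n) n) := rfl
end
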